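/- Let X be a Banach space and J_λ : X → X, λ > 0, a family of maps such that each J_λ is a contraction (‖J_λ u − J_λ v‖ ≤ ‖u − v‖) and the resolvent identity J_{λ₂}(f) = J_{λ₁}((λ₁/λ₂) f + (1 − λ₁/λ₂) J_{λ₂}(f)) holds for all λ₁, λ₂ > 0 and f ∈ X. Define A on D(A) := J_1(X) by A(u) := (f − u)/1 for u = J_1(f) (i.e., A u = f − u where J_1 f = u). Then D(A) = J_λ(X) for every λ > 0, and J_λ(f) = (I + λA)^{-1} f for all f ∈ X and λ > 0; in particular A is m-accretive. -/

import Mathlib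

/-- A family `{J_λ}` of contractions on a Banach space satisfying the resolvent
identity is the resolvent family of a single m-accretive operator `A` defined by
`A(J₁ f) = f − J₁ f`: the ranges `J_λ(X)` coincide for all `λ > 0`,
`J_λ f + λ A(J_λ f) = f` (i.e. `J_λ = (I + λA)⁻¹`), and `A` is accretive in the
sense that `I + λA` is expansive on `D(A) = J₁(X)`. -/
theorem resolvent_family_generates_m_accretive {X : Type*} [NormedAddCommGroup X]
    [NormedSpace ℝ X] [CompleteSpace X] (J : ℝ → X → X) (A : X → X)
    (hcontract : ∀ l : ℝ, 0 < l → ∀ u v : X, ‖J l u - J l v‖ ≤ ‖u - v‖)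
    (hres : ∀ l₁ l₂ : ℝ, 0 < l₁ → 0 < l₂ → ∀ f : X,
      J l₂ f = J l₁ ((l₁ / l₂) • f + (1 - l₁ / l₂) • J l₂ f))
    (hA : ∀ f : X, A (J 1 f) = f - J 1 f) :
    (∀ l : ℝ, 0 < l → Set.range (J l) = Set.range (J 1)) ∧
    (∀ l : ℝ, 0 < l → ∀ f : X, J l f + l • A (J l f) = f) ∧
    (∀ l : ℝ, 0 < l → ∀ u ∈ Set.range (J 1), ∀ v ∈ Set.range (J 1),
      ‖u - v‖ ≤ ‖(u + l • A u) - (v + l • A v)‖) := by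
  have hrange : ∀ l : ℝ, 0 < l → Set.range (J l) = Set.range (J 1) := by
    intro l hl
    ext x
    constructor
    · rintro ⟨f, rfl⟩
      exact ⟨(1 / l) • f + (1 - 1 / l) • J l f, (hres 1 l one_pos hl f).symm⟩
    · rintro ⟨f, rfl⟩
      refine ⟨l • f + (1 - l) • J 1 f, ?_⟩
      have := hres l 1 hl one_pos f
      simpa using this.symm
  have h2 : ∀ l : ℝ, 0 < l → ∀ f : X, J l f + l • A (J l f) = f := by
    intro l hl f
    have h := hres 1 l one_pos hl f
    have hl' : l ≠ 0 := ne_of_gt hl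
    rw [h, hA ((1 / l) • f + (1 - 1 / l) • J l f), ← h]
    match_scalars <;> field_simp <;> ring
  refine ⟨hrange, h2, ?_⟩
  intro l hl u hu v hv
  obtain ⟨f, hf⟩ : u ∈ Set.range (J l) := (hrange l hl).symm ▸ hu
  obtain ⟨g, hg⟩ : v ∈ Set.range (J l) := (hrange l hl).symm ▸ hv
  have hu' : u + l • A u = f := by rw [← hf]; exact h2 l hl f
  have hv' : v + l • A v = g := by rw [← hg]; exact h2 l hl g
  calc ‖u - v‖ = ‖J l f - J l g‖ := by rw [hf, hg]
    _ ≤ ‖f - g‖ := hcontract l hl f g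
    _ = ‖(u + l • A u) - (v + l • A v)‖ := by rw [hu', hv']
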